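/- arXiv:1408.6809 — 2 statements merged into one kernel-verified Lean document; each statement's English description precedes it below -/
import Mathlib

section
/- If Q is a 2n×2n symplectic matrix (QᵀJQ = J with J = [[0, I],[-I, 0]]) whose blocks satisfy Q₂₁Q₁₁⁻¹ = BBᵀ, -Q₁₁⁻¹Q₁₂ = CᵀC, and Q₂₂ - Q₂₁Q₁₁⁻¹Q₁₂ = A (with Q₁₁ and A invertible), then Q is uniquely determined: Q₁₁ = A⁻ᵀ, Q₁₂ = -A⁻ᵀCᵀC, Q₂₁ = BBᵀA⁻ᵀ, and Q₂₂ = A - BBᵀA⁻ᵀCᵀC. -/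
open Matrix

/-- A symplectic matrix `Q` whose blocks satisfy `Q₂₁Q₁₁⁻¹ = BBᵀ`,
`-Q₁₁⁻¹Q₁₂ = CᵀC` and `Q₂₂ - Q₂₁Q₁₁⁻¹Q₁₂ = A` is uniquely determined:
`Q₁₁ = A⁻ᵀ`, `Q₁₂ = -A⁻ᵀCᵀC`, `Q₂₁ = BBᵀA⁻ᵀ`, `Q₂₂ = A - BBᵀA⁻ᵀCᵀC`. -/
theorem stmt5 {n p q : ℕ}
    (Q11 Q12 Q21 Q22 : Matrix (Fin n) (Fin n) ℝ)
    (A : Matrix (Fin n) (Fin n) ℝ) (B : Matrix (Fin n) (Fin p) ℝ)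
    (C : Matrix (Fin q) (Fin n) ℝ)
    (J : Matrix (Fin n ⊕ Fin n) (Fin n ⊕ Fin n) ℝ)
    (hJ : J = Matrix.fromBlocks 0 1 (-1) 0)
    (Q : Matrix (Fin n ⊕ Fin n) (Fin n ⊕ Fin n) ℝ)
    (hQ : Q = Matrix.fromBlocks Q11 Q12 Q21 Q22)
    (hsymp : Qᵀ * J * Q = J)
    (hQ11 : IsUnit Q11) (hA : IsUnit A)
    (h1 : Q21 * Q11⁻¹ = B * Bᵀ)
    (h2 : -(Q11⁻¹ * Q12) = Cᵀ * C)
    (h3 : Q22 - Q21 * Q11⁻¹ * Q12 = A) :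
    Q11 = (A⁻¹)ᵀ ∧ Q12 = -((A⁻¹)ᵀ * (Cᵀ * C)) ∧
      Q21 = B * Bᵀ * (A⁻¹)ᵀ ∧ Q22 = A - B * Bᵀ * (A⁻¹)ᵀ * (Cᵀ * C) := by
  have hdet : IsUnit Q11.det := (Matrix.isUnit_iff_isUnit_det Q11).mp hQ11
  have hinv : Q11 * Q11⁻¹ = 1 := Matrix.mul_nonsing_inv Q11 hdet
  have hinv' : Q11⁻¹ * Q11 = 1 := Matrix.nonsing_inv_mul Q11 hdet
  -- rewrite h1, h2 without inverses
  have h1' : Q21 = B * Bᵀ * Q11 := by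
    calc Q21 = Q21 * Q11⁻¹ * Q11 := by rw [Matrix.mul_assoc, hinv', Matrix.mul_one]
    _ = B * Bᵀ * Q11 := by rw [h1]
  have h2' : Q12 = -(Q11 * (Cᵀ * C)) := by
    calc Q12 = Q11 * (Q11⁻¹ * Q12) := by rw [← Matrix.mul_assoc, hinv, Matrix.one_mul]
    _ = -(Q11 * (Cᵀ * C)) := by rw [← h2, Matrix.mul_neg, neg_neg]
  have h3' : Q22 = A + B * Bᵀ * Q12 := by
    have : Q21 * Q11⁻¹ * Q12 = B * Bᵀ * Q12 := by rw [h1]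
    rw [← this, ← h3]; abel
  -- extract block (1,2) of the symplectic condition
  subst hJ hQ
  rw [Matrix.fromBlocks_transpose, Matrix.fromBlocks_multiply,
    Matrix.fromBlocks_multiply] at hsymp
  have key := congrArg Matrix.toBlocks₁₂ hsymp
  simp only [Matrix.toBlocks_fromBlocks₁₂] at key
  -- key : Q11ᵀ * ... = 1
  simp only [Matrix.mul_zero, Matrix.zero_mul, Matrix.mul_one, Matrix.one_mul,
    Matrix.mul_neg, Matrix.neg_mul, add_zero, zero_add] at key
  -- now key should state Q11ᵀ * Q22 + (- (Q21ᵀ * Q12)) = 1 or similar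
  have hBB : Q21ᵀ = Q11ᵀ * (B * Bᵀ) := by
    rw [h1', Matrix.transpose_mul, Matrix.transpose_mul, Matrix.transpose_transpose]
  have hQ11A : Q11ᵀ * A = 1 := by
    have key' : Q11ᵀ * Q22 - Q21ᵀ * Q12 = 1 := by rw [← key]; abel
    rw [h3', hBB, Matrix.mul_add] at key'
    simp only [Matrix.mul_assoc] at key'
    rwa [add_sub_cancel_right] at key'
  have hQ11eq : Q11 = (A⁻¹)ᵀ := by
    have hAdet : IsUnit A.det := (Matrix.isUnit_iff_isUnit_det A).mp hA
    have : Q11ᵀ = A⁻¹ := by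
      calc Q11ᵀ = Q11ᵀ * (A * A⁻¹) := by rw [Matrix.mul_nonsing_inv A hAdet, Matrix.mul_one]
      _ = A⁻¹ := by rw [← Matrix.mul_assoc, hQ11A, Matrix.one_mul]
    calc Q11 = Q11ᵀᵀ := (Matrix.transpose_transpose Q11).symm
    _ = (A⁻¹)ᵀ := by rw [this]
  refine ⟨hQ11eq, ?_, ?_, ?_⟩
  · rw [h2', hQ11eq]
  · rw [h1', hQ11eq]
  · rw [h3', h2', hQ11eq]
    rw [Matrix.mul_neg]
    simp only [Matrix.mul_assoc]
    abel
end

section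
/- Suppose T_G(v₁, w) = (λ v₁, z) and T_G*(λ v₂, z) = (v₂, γ² w) for some complex λ with |λ| = 1, vectors v₁, v₂ ∈ ℂⁿ, signals w ∈ L²([0,h); ℂᵖ), z ∈ L²([0,h); ℂ^q), and γ > 0. Then ∫₀ʰ z(t)*z(t) dt = γ² ∫₀ʰ w(t)*w(t) dt, i.e., ‖z‖_{[0,h)} = γ ‖w‖_{[0,h)}. -/
open scoped InnerProductSpace

/-- If `T_G(v₁, w) = (λ v₁, z)` and `T_G*(λ v₂, z) = (v₂, γ² w)` with `|λ| = 1`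
and `γ > 0`, then `‖z‖ = γ ‖w‖` (norms on `[0,h)`). The Hilbert spaces
`ℂⁿ × L²` are modeled as `ℓ²`-products `WithLp 2 (ℂⁿ × W)`. -/
theorem stmt9 {n : ℕ}
    (W Z : Type*) [NormedAddCommGroup W] [InnerProductSpace ℂ W] [CompleteSpace W]
    [NormedAddCommGroup Z] [InnerProductSpace ℂ Z] [CompleteSpace Z]
    (TG : WithLp 2 (EuclideanSpace ℂ (Fin n) × W) →L[ℂ]
          WithLp 2 (EuclideanSpace ℂ (Fin n) × Z))
    (lam : ℂ) (hlam : ‖lam‖ = 1) (γ : ℝ) (hγ : 0 < γ)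
    (v₁ v₂ : EuclideanSpace ℂ (Fin n)) (w : W) (z : Z)
    (hfwd : TG ((WithLp.equiv 2 _).symm (v₁, w)) =
        (WithLp.equiv 2 _).symm (lam • v₁, z))
    (hadj : ContinuousLinearMap.adjoint TG ((WithLp.equiv 2 _).symm (lam • v₂, z)) =
        (WithLp.equiv 2 _).symm (v₂, ((γ : ℂ)^2) • w)) :
    ‖z‖ = γ * ‖w‖ := by
  have key := ContinuousLinearMap.adjoint_inner_left TG
    ((WithLp.equiv 2 _).symm (v₁, w)) ((WithLp.equiv 2 _).symm (lam • v₂, z))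
  rw [hadj, hfwd] at key
  simp only [WithLp.prod_inner_apply, WithLp.equiv_symm_apply, WithLp.ofLp_toLp,
    inner_smul_left, inner_smul_right] at key
  have hll : lam * (starRingEnd ℂ) lam = 1 := by
    rw [Complex.mul_conj]
    simp [Complex.normSq_eq_norm_sq, hlam]
  have key2 : ((starRingEnd ℂ) ((γ:ℂ)^2)) * (⟪w, w⟫_ℂ) = ⟪z, z⟫_ℂ := by
    linear_combination key + ⟪v₂, v₁⟫_ℂ * hll
  rw [map_pow, Complex.conj_ofReal] at key2
  have hre : (γ:ℝ)^2 * ‖w‖^2 = ‖z‖^2 := by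
    have := congrArg Complex.re key2
    simpa [inner_self_eq_norm_sq_to_K, ← Complex.ofReal_pow, ← Complex.ofReal_mul] using this
  have h1 : ‖z‖^2 = (γ * ‖w‖)^2 := by rw [← hre]; ring
  rw [← Real.sqrt_sq (norm_nonneg z), h1,
    Real.sqrt_sq (mul_nonneg hγ.le (norm_nonneg w))]
end
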